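/- arXiv:2207.04305 — 7 statements merged into one kernel-verified Lean document; each statement's English description precedes it below -/
import Mathlib

section
/- Let A be a nonempty finite set and d : A → ℝ a family of real numbers. Then the function ν ↦ -ν · log( Σ_{π ∈ A} exp(-d(π)/ν) ) tends to min_{π ∈ A} d(π) as ν tends to 0 from the right (limit along ν → 0⁺). -/
theorem gak_tendsto_dtw {ι : Type*} (A : Finset ι) (hA : A.Nonempty) (d : ι → ℝ) :
    Filter.Tendsto (fun ν : ℝ => -ν * Real.log (∑ π ∈ A, Real.exp (-d π / ν)))
      (nhdsWithin 0 (Set.Ioi 0)) (nhds (A.inf' hA d)) := by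
  set m := A.inf' hA d with hm
  obtain ⟨π₀, hπ₀, hdπ₀⟩ := A.exists_mem_eq_inf' hA d
  have key : ∀ ν ∈ Set.Ioi (0:ℝ),
      m - ν * Real.log A.card ≤ -ν * Real.log (∑ π ∈ A, Real.exp (-d π / ν)) ∧
      -ν * Real.log (∑ π ∈ A, Real.exp (-d π / ν)) ≤ m := by
    intro ν hν
    have hν' : (0:ℝ) < ν := hν
    have hSpos : 0 < ∑ π ∈ A, Real.exp (-d π / ν) :=
      Finset.sum_pos (fun π _ => Real.exp_pos _) hA
    have hlow : Real.exp (-m / ν) ≤ ∑ π ∈ A, Real.exp (-d π / ν) := by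
      have := Finset.single_le_sum (f := fun π => Real.exp (-d π / ν))
        (fun π _ => (Real.exp_pos _).le) hπ₀
      rw [hm, hdπ₀]
      exact this
    have hup : ∑ π ∈ A, Real.exp (-d π / ν) ≤ A.card * Real.exp (-m / ν) := by
      calc ∑ π ∈ A, Real.exp (-d π / ν) ≤ ∑ _π ∈ A, Real.exp (-m / ν) := by
            apply Finset.sum_le_sum
            intro π hπ
            apply Real.exp_le_exp.mpr
            gcongr
            exact A.inf'_le d hπ
        _ = A.card * Real.exp (-m / ν) := by rw [Finset.sum_const, nsmul_eq_mul]
    constructor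
    · have hlog : Real.log (∑ π ∈ A, Real.exp (-d π / ν)) ≤
          Real.log A.card + (-m / ν) := by
        calc Real.log (∑ π ∈ A, Real.exp (-d π / ν))
            ≤ Real.log (A.card * Real.exp (-m / ν)) := Real.log_le_log hSpos hup
          _ = Real.log A.card + (-m / ν) := by
              rw [Real.log_mul (by positivity) (Real.exp_ne_zero _), Real.log_exp]
      have h1 := mul_le_mul_of_nonneg_left hlog hν'.le
      have h2 : ν * (Real.log A.card + -m / ν) = ν * Real.log A.card - m := by
        field_simp; ring
      linarith
    · have hlog : (-m / ν) ≤ Real.log (∑ π ∈ A, Real.exp (-d π / ν)) := by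
        calc (-m / ν) = Real.log (Real.exp (-m / ν)) := (Real.log_exp _).symm
          _ ≤ _ := Real.log_le_log (Real.exp_pos _) hlow
      have h1 := mul_le_mul_of_nonneg_left hlog hν'.le
      have h2 : ν * (-m / ν) = -m := by field_simp
      linarith
  have hg : Filter.Tendsto (fun ν : ℝ => m - ν * Real.log A.card)
      (nhdsWithin 0 (Set.Ioi 0)) (nhds m) := by
    have : Filter.Tendsto (fun ν : ℝ => m - ν * Real.log A.card) (nhds 0)
        (nhds (m - 0 * Real.log A.card)) := by
      exact (tendsto_const_nhds.sub ((continuous_id.mul continuous_const).tendsto 0))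
    simp only [zero_mul, sub_zero] at this
    exact this.mono_left nhdsWithin_le_nhds
  exact tendsto_of_tendsto_of_tendsto_of_le_of_le' hg tendsto_const_nhds
    (Filter.eventually_mem_set.mpr self_mem_nhdsWithin |>.mono fun ν hν => (key ν hν).1)
    (Filter.eventually_mem_set.mpr self_mem_nhdsWithin |>.mono fun ν hν => (key ν hν).2)
end

section
/- Let E be a finite-dimensional real inner product space and f : E → ℝ a differentiable function whose gradient is L-Lipschitz (L > 0). Suppose f attains its infimum f* and let X* = {x ∈ E : f(x) = f*} be its nonempty set of global minimizers. If f satisfies the μ-PL condition with μ > 0, i.e., ‖∇f(x)‖² ≥ 2μ(f(x) - f*) for all x, then f satisfies the μ-error-bound condition: ‖∇f(x)‖ ≥ μ · dist(x, X*) for all x ∈ E. -/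
open Metric Real

lemma deriv_nonneg_of_min_right {ψ : ℝ → ℝ} {d : ℝ} (hd : HasDerivAt ψ d 0)
    (h : ∀ t : ℝ, 0 ≤ t → ψ 0 ≤ ψ t) : 0 ≤ d := by
  have h1 : Filter.Tendsto (slope ψ 0) (nhdsWithin 0 (Set.Ioi 0)) (nhds d) :=
    (hasDerivAt_iff_tendsto_slope.mp hd).mono_left
      (nhdsWithin_mono _ (by intro t ht; exact ne_of_gt ht))
  refine ge_of_tendsto h1 ?_
  filter_upwards [self_mem_nhdsWithin] with t ht
  have htpos : (0:ℝ) < t := ht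
  rw [slope_def_field]
  exact div_nonneg (by linarith [h t htpos.le]) (by linarith)

-- key distance bound: for 0 < c' with c'^2 < μ/2, infDist x X* ≤ sqrt(f x - f*)/c'
lemma key {E : Type*} [NormedAddCommGroup E]
    [InnerProductSpace ℝ E] [FiniteDimensional ℝ E]
    (f : E → ℝ) (hf : Differentiable ℝ f)
    (fstar : ℝ) (hlb : ∀ x, fstar ≤ f x)
    (μ : ℝ) (hμ : 0 < μ)
    (hPL : ∀ x, 2 * μ * (f x - fstar) ≤ ‖gradient f x‖ ^ 2)
    (x : E) (c' : ℝ) (hc0 : 0 < c') (hc : c' ^ 2 < μ / 2) :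
    Metric.infDist x {y | f y = fstar} ≤ Real.sqrt (f x - fstar) / c' := by
  set g : E → ℝ := fun z => Real.sqrt (f z - fstar) with hg
  set h : E → ℝ := fun z => g z + c' * ‖z - x‖ with hhdef
  have hgcont : Continuous g := (hf.continuous.sub continuous_const).sqrt
  have hhcont : Continuous h := hgcont.add (continuous_const.mul ((continuous_id.sub continuous_const).norm))
  set R : ℝ := g x / c' + 1 with hR
  have hRpos : 0 < R := by positivity
  -- minimizer on the closed ball
  obtain ⟨y, hyK, hymin⟩ := (isCompact_closedBall x R).exists_isMinOn
    ⟨x, mem_closedBall_self hRpos.le⟩ hhcont.continuousOn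
  -- y is a global minimizer of h
  have hglob : ∀ z, h y ≤ h z := by
    intro z
    by_cases hz : z ∈ closedBall x R
    · exact hymin hz
    · have hzR : R < ‖z - x‖ := by
        simpa [dist_eq_norm] using lt_of_not_ge (fun hle => hz (mem_closedBall.mpr (by simpa [dist_eq_norm] using hle)))
      have h1 : h y ≤ h x := hymin (mem_closedBall_self hRpos.le)
      have h2 : h x = g x := by simp [hhdef]
      have hcr : c' * R = g x + c' := by rw [hR]; field_simp
      have h3 : g x < c' * ‖z - x‖ := by
        have := mul_lt_mul_of_pos_left hzR hc0
        rw [hcr] at this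
        linarith
      have h4 : 0 ≤ g z := Real.sqrt_nonneg _
      have : h x < h z := by
        simp only [hhdef, sub_self, norm_zero, mul_zero, add_zero]
        linarith
      linarith
  -- y is a global minimizer, hence f y = fstar
  have hyfstar : f y = fstar := by
    by_contra hne
    have hΔpos : 0 < f y - fstar := lt_of_le_of_ne (by linarith [hlb y]) (by intro hc2; exact hne (by linarith))
    set w : E := gradient f y with hw
    have hwne : w ≠ 0 := by
      intro h0
      have := hPL y
      rw [← hw, h0] at this
      simp at this
      nlinarith
    set s : ℝ := Real.sqrt (f y - fstar) with hs
    have hspos : 0 < s := Real.sqrt_pos.mpr hΔpos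
    set v : E := -w with hv
    -- the curve t ↦ f (y + t • v)
    have hcurve : ∀ t : ℝ, HasDerivAt (fun t : ℝ => y + t • v) v t := by
      intro t
      simpa using ((hasDerivAt_id t).smul_const v).const_add y
    have hfd : HasDerivAt (fun t : ℝ => f (y + t • v)) (inner ℝ w v : ℝ) 0 := by
      have hgr : HasGradientAt f w y := (hf y).hasGradientAt
      have hF : HasFDerivAt f ((InnerProductSpace.toDual ℝ E) w) y := hgr.hasFDerivAt
      have hF' : HasFDerivAt f ((InnerProductSpace.toDual ℝ E) w) (y + (0:ℝ) • v) := by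
        simpa using hF
      have := hF'.comp_hasDerivAt (0:ℝ) (hcurve 0)
      exact this
    have hsq : HasDerivAt (fun t : ℝ => Real.sqrt (f (y + t • v) - fstar))
        ((inner ℝ w v : ℝ) / (2 * s)) 0 := by
      have h1 : HasDerivAt (fun t : ℝ => f (y + t • v) - fstar) (inner ℝ w v : ℝ) 0 := hfd.sub_const _
      have h2 := (Real.hasDerivAt_sqrt (x := f (y + (0:ℝ) • v) - fstar) (by simpa using hΔpos.ne')).comp (0:ℝ) h1
      simp only [Function.comp_def] at h2
      convert h2 using 1
      · rfl
      · rfl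
      · simp [hs, div_eq_mul_inv, mul_comm]
    set ψ : ℝ → ℝ := fun t => Real.sqrt (f (y + t • v) - fstar) + c' * (t * ‖v‖) with hψ
    have hψd : HasDerivAt ψ ((inner ℝ w v : ℝ) / (2 * s) + c' * ‖v‖) 0 := by
      have h3 : HasDerivAt (fun t : ℝ => c' * (t * ‖v‖)) (c' * ‖v‖) 0 := by
        simpa using ((hasDerivAt_id (0:ℝ)).mul_const ‖v‖).const_mul c'
      exact hsq.add h3
    have hψmin : ∀ t : ℝ, 0 ≤ t → ψ 0 ≤ ψ t := by
      intro t ht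
      have h5 := hglob (y + t • v)
      simp only [hhdef, hg] at h5
      have h6 : ‖y + t • v - x‖ - ‖y - x‖ ≤ t * ‖v‖ := by
        have := norm_sub_norm_le (y + t • v - x) (y - x)
        have he : ‖(y + t • v - x) - (y - x)‖ = t * ‖v‖ := by
          have h0 : (y + t • v - x) - (y - x) = t • v := by abel
          rw [h0, norm_smul]
          simp [abs_of_nonneg ht]
        linarith [he ▸ this]
      have h7 : c' * (‖y + t • v - x‖ - ‖y - x‖) ≤ c' * (t * ‖v‖) :=
        mul_le_mul_of_nonneg_left h6 hc0.le
      simp only [hψ, zero_smul, add_zero, mul_zero, zero_mul]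
      nlinarith [h5, h7]
    have hkey := deriv_nonneg_of_min_right hψd hψmin
    -- inner w v = -‖w‖^2, ‖v‖ = ‖w‖
    have hinner : (inner ℝ w v : ℝ) = -‖w‖ ^ 2 := by
      simp [hv, inner_neg_right, real_inner_self_eq_norm_sq]
    have hnv : ‖v‖ = ‖w‖ := by simp [hv]
    rw [hinner, hnv] at hkey
    have hwpos : 0 < ‖w‖ := norm_pos_iff.mpr hwne
    -- ‖w‖ ≤ 2 c' s
    have hwle : ‖w‖ ≤ 2 * c' * s := by
      rw [neg_div] at hkey
      have h8 : ‖w‖ ^ 2 / (2 * s) ≤ c' * ‖w‖ := by linarith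
      have h9 : ‖w‖ ^ 2 ≤ c' * ‖w‖ * (2 * s) := by
        rw [div_le_iff₀ (by positivity)] at h8; linarith
      nlinarith
    have hPLy := hPL y
    rw [← hw] at hPLy
    have hs2 : s ^ 2 = f y - fstar := Real.sq_sqrt hΔpos.le
    nlinarith [hwle, hPLy, hspos, hc0]
  -- conclude
  have hmem : y ∈ {y | f y = fstar} := hyfstar
  have hd : Metric.infDist x {y | f y = fstar} ≤ dist x y := Metric.infDist_le_dist_of_mem hmem
  have h10 : h y ≤ h x := hglob x
  have h11 : g y + c' * ‖y - x‖ ≤ g x := by simpa [hhdef] using h10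
  have h12 : 0 ≤ g y := Real.sqrt_nonneg _
  have h13 : ‖y - x‖ ≤ g x / c' := by
    rw [le_div_iff₀ hc0]; nlinarith
  calc Metric.infDist x {y | f y = fstar} ≤ dist x y := hd
    _ = ‖y - x‖ := by rw [dist_comm, dist_eq_norm]
    _ ≤ g x / c' := h13

theorem pl_implies_error_bound {E : Type*} [NormedAddCommGroup E]
    [InnerProductSpace ℝ E] [FiniteDimensional ℝ E]
    (f : E → ℝ) (hf : Differentiable ℝ f) (L : ℝ) (hL : 0 < L)
    (hLip : ∀ x y, ‖gradient f x - gradient f y‖ ≤ L * ‖x - y‖)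
    (fstar : ℝ) (hlb : ∀ x, fstar ≤ f x) (hatt : ∃ x, f x = fstar)
    (μ : ℝ) (hμ : 0 < μ)
    (hPL : ∀ x, 2 * μ * (f x - fstar) ≤ ‖gradient f x‖ ^ 2) :
    ∀ x, μ * Metric.infDist x {y | f y = fstar} ≤ ‖gradient f x‖ := by
  intro x
  set D := Metric.infDist x {y | f y = fstar} with hD
  have hD0 : 0 ≤ D := Metric.infDist_nonneg
  have hΔ0 : 0 ≤ f x - fstar := by linarith [hlb x]
  set c : ℝ := Real.sqrt (μ / 2) with hcdef
  have hcpos : 0 < c := Real.sqrt_pos.mpr (by linarith)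
  -- step 1 : D * c ≤ sqrt (f x - fstar)
  have hstep : D * c ≤ Real.sqrt (f x - fstar) := by
    by_contra hcon
    push_neg at hcon
    have hDpos : 0 < D := by
      by_contra hD'
      push_neg at hD'
      have : D = 0 := le_antisymm hD' hD0
      rw [this] at hcon
      simp at hcon
      linarith [Real.sqrt_nonneg (f x - fstar), hcon]
    have hlt : Real.sqrt (f x - fstar) / D < c := by
      rw [div_lt_iff₀ hDpos]; linarith [hcon]
    obtain ⟨c', hc1, hc2⟩ := exists_between hlt
    have hc'pos : 0 < c' :=
      lt_of_le_of_lt (div_nonneg (Real.sqrt_nonneg _) hD0) hc1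
    have hc'sq : c' ^ 2 < μ / 2 := by
      have : c' ^ 2 < c ^ 2 := by nlinarith
      rwa [hcdef, Real.sq_sqrt (by linarith : (0:ℝ) ≤ μ / 2)] at this
    have := key f hf fstar hlb μ hμ hPL x c' hc'pos hc'sq
    rw [← hD] at this
    rw [div_lt_iff₀ hDpos] at hc1
    rw [le_div_iff₀ hc'pos] at this
    nlinarith
  -- step 2 : conclude
  have hsq : D ^ 2 * (μ / 2) ≤ f x - fstar := by
    have h1 : (D * c) ^ 2 ≤ Real.sqrt (f x - fstar) ^ 2 :=
      pow_le_pow_left₀ (by positivity) hstep 2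
    rw [Real.sq_sqrt hΔ0] at h1
    calc D ^ 2 * (μ / 2) = (D * c) ^ 2 := by
          rw [mul_pow, hcdef, Real.sq_sqrt (by linarith : (0:ℝ) ≤ μ / 2)]
      _ ≤ f x - fstar := h1
  have h2 : (μ * D) ^ 2 ≤ ‖gradient f x‖ ^ 2 := by nlinarith [hPL x]
  calc μ * D = Real.sqrt ((μ * D) ^ 2) := (Real.sqrt_sq (by positivity)).symm
    _ ≤ Real.sqrt (‖gradient f x‖ ^ 2) := Real.sqrt_le_sqrt h2
    _ = ‖gradient f x‖ := Real.sqrt_sq (norm_nonneg _)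
end

section
/- Let E be a finite-dimensional real inner product space and f : E → ℝ a differentiable function whose gradient is L-Lipschitz (L > 0). Suppose f attains its infimum f* and let X* = {x ∈ E : f(x) = f*} be its nonempty set of global minimizers. If f satisfies the μ-PL condition with μ > 0, then f satisfies μ-quadratic growth: f(x) - f* ≥ (μ/2) · dist(x, X*)² for all x ∈ E. -/
/-- Finite-dimensional Ekeland-type principle via compact minimization. -/
lemma ekeland_fd {E : Type*} [NormedAddCommGroup E] [NormedSpace ℝ E]
    [FiniteDimensional ℝ E] (g : E → ℝ) (hg : Continuous g)
    (hg0 : ∀ z, 0 ≤ g z) (x₀ : E) (c : ℝ) (hc : 0 < c) :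
    ∃ y, g y ≤ g x₀ ∧ c * ‖y - x₀‖ ≤ g x₀ - g y ∧ ∀ z, g y - c * ‖z - y‖ ≤ g z := by
  set R : ℝ := g x₀ / c + 1 with hR
  have hRpos : 0 < R := by have := hg0 x₀; positivity
  have hB : IsCompact (Metric.closedBall x₀ R) := isCompact_closedBall x₀ R
  have hx₀B : x₀ ∈ Metric.closedBall x₀ R := Metric.mem_closedBall_self hRpos.le
  obtain ⟨y, hyB, hmin⟩ := hB.exists_isMinOn ⟨x₀, hx₀B⟩
    ((hg.add (continuous_const.mul ((continuous_id.sub continuous_const).norm))).continuousOn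
      (s := Metric.closedBall x₀ R))
  have hmin' : ∀ z ∈ Metric.closedBall x₀ R,
      g y + c * ‖y - x₀‖ ≤ g z + c * ‖z - x₀‖ := fun z hz => hmin hz
  have h₀ : g y + c * ‖y - x₀‖ ≤ g x₀ := by
    simpa using hmin' x₀ hx₀B
  have hgy : g y ≤ g x₀ := le_trans (le_add_of_nonneg_right (by positivity)) h₀
  refine ⟨y, hgy, by linarith, fun z => ?_⟩
  by_cases hz : z ∈ Metric.closedBall x₀ R
  · have h1 := hmin' z hz
    have h2 : ‖z - x₀‖ ≤ ‖z - y‖ + ‖y - x₀‖ := by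
      simpa [sub_add_sub_cancel] using norm_add_le (z - y) (y - x₀)
    nlinarith [norm_nonneg (z - y)]
  · have hzR : R < ‖z - x₀‖ := by
      simpa [Metric.mem_closedBall, dist_eq_norm] using hz
    have h2 : ‖z - x₀‖ - ‖y - x₀‖ ≤ ‖z - y‖ := by
      simpa [sub_sub_sub_cancel_right] using norm_sub_norm_le (z - x₀) (y - x₀)
    have hgz : 0 ≤ g z := hg0 z
    have hcR : c * R = g x₀ + c := by rw [hR, mul_add, mul_one, mul_div_assoc', mul_comm c (g x₀), mul_div_assoc, div_self hc.ne', mul_one]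
    nlinarith

lemma grad_bound {E : Type*} [NormedAddCommGroup E] [InnerProductSpace ℝ E]
    [CompleteSpace E] (f : E → ℝ) (hf : Differentiable ℝ f) (fstar c : ℝ) (hc : 0 < c) (y : E)
    (hy : fstar < f y)
    (h : ∀ z, Real.sqrt (f y - fstar) - c * ‖z - y‖ ≤ Real.sqrt (f z - fstar)) :
    ‖gradient f y‖ ≤ 2 * c * Real.sqrt (f y - fstar) := by
  set s : ℝ := f y - fstar with hs
  have hspos : 0 < s := by simpa [hs] using sub_pos.mpr hy
  by_cases hg : gradient f y = 0
  · have : 0 < Real.sqrt s := Real.sqrt_pos.mpr hspos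
    rw [hg, norm_zero]
    positivity
  · have hgn : 0 < ‖gradient f y‖ := norm_pos_iff.mpr hg
    set v : E := -(‖gradient f y‖⁻¹ • gradient f y) with hv
    have hvn : ‖v‖ = 1 := by
      rw [hv, norm_neg, norm_smul, norm_inv, norm_norm]
      field_simp
    -- derivative of the line
    have hline : HasDerivAt (fun t : ℝ => y + t • v) v 0 := by
      simpa using ((hasDerivAt_id (0 : ℝ)).smul_const v).const_add y
    have hFd : HasFDerivAt f (InnerProductSpace.toDual ℝ E (gradient f y)) y :=
      (hf y).hasGradientAt.hasFDerivAt
    have hcomp : HasDerivAt (fun t : ℝ => f (y + t • v))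
        (inner ℝ (gradient f y) v : ℝ) 0 := by
      have hFd' : HasFDerivAt f ((InnerProductSpace.toDual ℝ E) (gradient f y))
          ((fun t : ℝ => y + t • v) 0) := by simpa using hFd
      have := hFd'.comp_hasDerivAt (0 : ℝ) hline
      simpa [Function.comp_def, InnerProductSpace.toDual_apply_apply] using this
    have hinner : (inner ℝ (gradient f y) v : ℝ) = -‖gradient f y‖ := by
      rw [hv, inner_neg_right, real_inner_smul_right, real_inner_self_eq_norm_sq]
      field_simp [pow_two]
    have hψ : HasDerivAt (fun t : ℝ => f (y + t • v) - fstar) (-‖gradient f y‖) 0 := by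
      simpa [hinner] using hcomp.sub_const fstar
    have hsqrt : HasDerivAt Real.sqrt (1 / (2 * Real.sqrt s)) s :=
      Real.hasDerivAt_sqrt hspos.ne'
    have hφ : HasDerivAt (fun t : ℝ => Real.sqrt (f (y + t • v) - fstar))
        (1 / (2 * Real.sqrt s) * (-‖gradient f y‖)) 0 := by
      have hsqrt' : HasDerivAt Real.sqrt (1 / (2 * Real.sqrt s))
          ((fun t : ℝ => f (y + t • v) - fstar) 0) := by
        simpa [hs] using hsqrt
      have := hsqrt'.comp (0 : ℝ) hψ
      simpa [Function.comp, Function.comp_def] using this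
    -- one-sided slope bound
    set D : ℝ := 1 / (2 * Real.sqrt s) * (-‖gradient f y‖) with hD
    have hslope : Filter.Tendsto (slope (fun t : ℝ => Real.sqrt (f (y + t • v) - fstar)) 0)
        (nhdsWithin 0 (Set.Ioi 0)) (nhds D) :=
      (hasDerivAt_iff_tendsto_slope.mp hφ).mono_left
        (nhdsWithin_mono 0 (fun t ht => ne_of_gt ht))
    have hDc : -c ≤ D := by
      refine ge_of_tendsto hslope ?_
      filter_upwards [self_mem_nhdsWithin] with t ht
      have ht0 : 0 < t := ht
      have hnorm : ‖(y + t • v) - y‖ = t := by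
        simp [norm_smul, hvn, abs_of_pos ht0]
      have := h (y + t • v)
      rw [hnorm] at this
      rw [slope_def_field]
      have h00 : f (y + (0:ℝ) • v) = f y := by simp
      rw [h00, sub_zero, le_div_iff₀ ht0, ← hs]
      linarith
    have hq : 0 < Real.sqrt s := Real.sqrt_pos.mpr hspos
    have hkey : -‖gradient f y‖ = D * (2 * Real.sqrt s) := by
      rw [hD]; field_simp
    have h4 : -c * (2 * Real.sqrt s) ≤ D * (2 * Real.sqrt s) :=
      mul_le_mul_of_nonneg_right hDc (by positivity)
    rw [← hkey] at h4
    nlinarith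

theorem pl_implies_quadratic_growth {E : Type*} [NormedAddCommGroup E]
    [InnerProductSpace ℝ E] [FiniteDimensional ℝ E]
    (f : E → ℝ) (hf : Differentiable ℝ f) (L : ℝ) (hL : 0 < L)
    (hLip : ∀ x y, ‖gradient f x - gradient f y‖ ≤ L * ‖x - y‖)
    (fstar : ℝ) (hlb : ∀ x, fstar ≤ f x) (hatt : ∃ x, f x = fstar)
    (μ : ℝ) (hμ : 0 < μ)
    (hPL : ∀ x, 2 * μ * (f x - fstar) ≤ ‖gradient f x‖ ^ 2) :
    ∀ x, μ / 2 * Metric.infDist x {y | f y = fstar} ^ 2 ≤ f x - fstar := by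
  intro x
  set S : Set E := {y | f y = fstar} with hS
  set d : ℝ := Metric.infDist x S with hd
  have hd0 : 0 ≤ d := Metric.infDist_nonneg
  have hF0 : 0 ≤ f x - fstar := sub_nonneg.mpr (hlb x)
  set g : E → ℝ := fun z => Real.sqrt (f z - fstar) with hg
  have hgcont : Continuous g := by
    exact Real.continuous_sqrt.comp ((hf.continuous).sub continuous_const)
  have hgnn : ∀ z, 0 ≤ g z := fun z => Real.sqrt_nonneg _
  -- key step: for every admissible c, c^2 * d^2 ≤ f x - fstar
  have key : ∀ c : ℝ, 0 < c → c ^ 2 < μ / 2 → c ^ 2 * d ^ 2 ≤ f x - fstar := by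
    intro c hc hc2
    obtain ⟨y, h1, h2, h3⟩ := ekeland_fd g hgcont hgnn x c hc
    have hyS : y ∈ S := by
      by_contra hyS
      have hy : fstar < f y := lt_of_le_of_ne (hlb y) (fun h => hyS h.symm)
      have hgb : ‖gradient f y‖ ≤ 2 * c * Real.sqrt (f y - fstar) :=
        grad_bound f hf fstar c hc y hy (fun z => h3 z)
      have hsq : Real.sqrt (f y - fstar) ^ 2 = f y - fstar :=
        Real.sq_sqrt (le_of_lt (sub_pos.mpr hy))
      have hPLy := hPL y
      have hgb2 : ‖gradient f y‖ ^ 2 ≤ (2 * c * Real.sqrt (f y - fstar)) ^ 2 := by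
        have := norm_nonneg (gradient f y)
        nlinarith
      have hs : 0 < f y - fstar := sub_pos.mpr hy
      nlinarith [Real.sqrt_nonneg (f y - fstar)]
    have hdy : d ≤ ‖x - y‖ := by
      rw [← dist_eq_norm]
      exact Metric.infDist_le_dist_of_mem hyS
    have hgy : g y = 0 := by
      rw [hg]
      simp only [hS, Set.mem_setOf_eq] at hyS
      simp [hyS]
    have hcd : c * d ≤ Real.sqrt (f x - fstar) := by
      have h2' : c * ‖y - x‖ ≤ g x - g y := h2
      rw [hgy, sub_zero] at h2'
      have : ‖y - x‖ = ‖x - y‖ := norm_sub_rev y x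
      calc c * d ≤ c * ‖x - y‖ := by nlinarith
        _ = c * ‖y - x‖ := by rw [this]
        _ ≤ g x := h2'
    have hsqF : Real.sqrt (f x - fstar) ^ 2 = f x - fstar := Real.sq_sqrt hF0
    nlinarith [Real.sqrt_nonneg (f x - fstar), mul_nonneg hc.le hd0]
  -- pass to the limit c^2 → μ/2
  refine le_of_forall_pos_le_add ?_
  intro ε hε
  by_cases hdz : d = 0
  · rw [hdz]
    nlinarith
  · have hdpos : 0 < d := lt_of_le_of_ne hd0 (Ne.symm hdz)
    set δ : ℝ := min (ε / d ^ 2) (μ / 4) with hδ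
    have hδpos : 0 < δ := lt_min (by positivity) (by positivity)
    have hδμ : δ ≤ μ / 4 := min_le_right _ _
    set c : ℝ := Real.sqrt (μ / 2 - δ) with hc
    have hpos : 0 < μ / 2 - δ := by linarith
    have hcpos : 0 < c := Real.sqrt_pos.mpr hpos
    have hc2 : c ^ 2 = μ / 2 - δ := Real.sq_sqrt hpos.le
    have := key c hcpos (by rw [hc2]; linarith)
    have hδd : δ * d ^ 2 ≤ ε := by
      have : δ ≤ ε / d ^ 2 := min_le_left _ _
      rw [le_div_iff₀ (by positivity)] at this
      linarith [this]
    nlinarith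
end

section
/- Let E be a finite-dimensional real inner product space and f : E → ℝ a differentiable function whose gradient is L-Lipschitz (L > 0). Suppose f attains its infimum f* and let X* = {x ∈ E : f(x) = f*} be its nonempty set of global minimizers. If f satisfies the μ-error-bound condition with μ > 0, i.e., ‖∇f(x)‖ ≥ μ · dist(x, X*) for all x, then f satisfies the (μ²/L)-PL condition: ‖∇f(x)‖² ≥ 2(μ²/L)(f(x) - f*) for all x ∈ E. -/
open InnerProductSpace Set

/-- Descent lemma at a critical point: if the gradient is `L`-Lipschitz and
vanishes at `y`, then `f x ≤ f y + L/2 ‖x - y‖²`. -/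
lemma descent_at_critical {E : Type*} [NormedAddCommGroup E]
    [InnerProductSpace ℝ E] [CompleteSpace E]
    (f : E → ℝ) (hf : Differentiable ℝ f) (L : ℝ) (hL : 0 < L)
    (hLip : ∀ x y, ‖gradient f x - gradient f y‖ ≤ L * ‖x - y‖)
    (y : E) (hy : gradient f y = 0) (x : E) :
    f x ≤ f y + L / 2 * ‖x - y‖ ^ 2 := by
  set v := x - y with hv
  set g : ℝ → ℝ := fun t => f (y + t • v) - L / 2 * ‖v‖ ^ 2 * t ^ 2 with hg
  have hderiv : ∀ t : ℝ, HasDerivAt g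
      (⟪gradient f (y + t • v), v⟫_ℝ - L * ‖v‖ ^ 2 * t) t := by
    intro t
    have hline : HasDerivAt (fun t : ℝ => y + t • v) v t := by
      simpa using ((hasDerivAt_id t).smul_const v).const_add y
    have h1 : HasDerivAt (fun t : ℝ => f (y + t • v))
        (fderiv ℝ f (y + t • v) v) t :=
      (hf.differentiableAt.hasFDerivAt).comp_hasDerivAt t hline
    have h1' : fderiv ℝ f (y + t • v) v = ⟪gradient f (y + t • v), v⟫_ℝ := by
      rw [gradient]
      simp [InnerProductSpace.toDual_apply_apply]
    rw [h1'] at h1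
    have h2 : HasDerivAt (fun t : ℝ => L / 2 * ‖v‖ ^ 2 * t ^ 2)
        (L / 2 * ‖v‖ ^ 2 * (2 * t)) t := by
      simpa using ((hasDerivAt_pow 2 t).const_mul (L / 2 * ‖v‖ ^ 2))
    have := h1.sub h2
    exact this.congr_deriv (by ring)
  have hanti : AntitoneOn g (Icc 0 1) := by
    apply antitoneOn_of_deriv_nonpos (convex_Icc 0 1)
    · exact ((hf.continuous.comp (by continuity)).sub (by continuity)).continuousOn
    · intro t ht
      exact (hderiv t).differentiableAt.differentiableWithinAt
    · intro t ht
      rw [interior_Icc] at ht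
      rw [(hderiv t).deriv]
      have hbound : ⟪gradient f (y + t • v), v⟫_ℝ ≤ L * ‖v‖ ^ 2 * t := by
        have h0 : ⟪gradient f (y + t • v), v⟫_ℝ
            = ⟪gradient f (y + t • v) - gradient f y, v⟫_ℝ := by
          rw [hy]; simp
        rw [h0]
        calc ⟪gradient f (y + t • v) - gradient f y, v⟫_ℝ
            ≤ ‖gradient f (y + t • v) - gradient f y‖ * ‖v‖ :=
              real_inner_le_norm _ _
          _ ≤ L * ‖y + t • v - y‖ * ‖v‖ := by
              have := hLip (y + t • v) y
              exact mul_le_mul_of_nonneg_right this (norm_nonneg v)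
          _ = L * ‖v‖ ^ 2 * t := by
              have : ‖y + t • v - y‖ = t * ‖v‖ := by
                simp [norm_smul, abs_of_pos ht.1]
              rw [this]; ring
      linarith
  have := hanti (left_mem_Icc.mpr zero_le_one) (right_mem_Icc.mpr zero_le_one) zero_le_one
  simp only [hg] at this
  simp only [zero_smul, add_zero, one_smul, add_sub_cancel] at this
  have hxy : y + v = x := by rw [hv]; abel
  rw [hxy] at this
  nlinarith [this]

theorem error_bound_implies_pl {E : Type*} [NormedAddCommGroup E]
    [InnerProductSpace ℝ E] [FiniteDimensional ℝ E]
    (f : E → ℝ) (hf : Differentiable ℝ f) (L : ℝ) (hL : 0 < L)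
    (hLip : ∀ x y, ‖gradient f x - gradient f y‖ ≤ L * ‖x - y‖)
    (fstar : ℝ) (hlb : ∀ x, fstar ≤ f x) (hatt : ∃ x, f x = fstar)
    (μ : ℝ) (hμ : 0 < μ)
    (hEB : ∀ x, μ * Metric.infDist x {y | f y = fstar} ≤ ‖gradient f x‖) :
    ∀ x, 2 * (μ ^ 2 / L) * (f x - fstar) ≤ ‖gradient f x‖ ^ 2 := by
  intro x
  set X : Set E := {y | f y = fstar} with hX
  have hXne : X.Nonempty := hatt
  have hXclosed : IsClosed X := isClosed_eq hf.continuous continuous_const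
  obtain ⟨y, hyX, hyd⟩ := hXclosed.exists_infDist_eq_dist hXne x
  have hymin : IsLocalMin f y := by
    apply IsMinOn.isLocalMin _ (Filter.univ_mem)
    intro z _
    rw [hyX]
    exact hlb z
  have hgrad0 : gradient f y = 0 := by
    rw [gradient, hymin.fderiv_eq_zero, map_zero]
  have hdesc := descent_at_critical f hf L hL hLip y hgrad0 x
  rw [hyX] at hdesc
  have hd : Metric.infDist x X = ‖x - y‖ := by rw [hyd, dist_eq_norm]
  have hEBx := hEB x
  rw [hd] at hEBx
  have hd0 : (0:ℝ) ≤ ‖x - y‖ := norm_nonneg _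
  have h1 : μ ^ 2 * ‖x - y‖ ^ 2 ≤ ‖gradient f x‖ ^ 2 := by
    nlinarith [mul_nonneg hμ.le hd0]
  have h2 : f x - fstar ≤ L / 2 * ‖x - y‖ ^ 2 := by linarith
  have key : 2 * (μ ^ 2 / L) * (f x - fstar) = 2 * μ ^ 2 * (f x - fstar) / L := by ring
  rw [key, div_le_iff₀ hL]
  nlinarith [mul_le_mul_of_nonneg_left h2 (sq_nonneg μ), mul_le_mul_of_nonneg_left h1 hL.le]
end

section
/- Let (Ω, 𝓕, ℙ) be a probability space, E a finite-dimensional real inner product space, and P : E → ℝ a differentiable function whose gradient is L_P-Lipschitz (L_P > 0) and which is bounded below with infimum P*. Let w ∈ E, let 0 < η ≤ 1/(4L_P), and let G : Ω → E be a square-integrable random vector with mean m = 𝔼[G] and 𝔼[‖G - m‖²] ≤ σ². Then 𝔼[P(w - ηG)] - P* ≤ (P(w) - P*) - (η/2)‖∇P(w)‖² + (η/2)‖∇P(w) - m‖² + (L_P η² σ²)/2. -/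
open MeasureTheory RealInnerProductSpace

lemma descent_lemma {E : Type*} [NormedAddCommGroup E] [InnerProductSpace ℝ E] [CompleteSpace E]
    (P : E → ℝ) (hP : Differentiable ℝ P) (LP : ℝ) (hLP : 0 ≤ LP)
    (hLip : ∀ x y, ‖gradient P x - gradient P y‖ ≤ LP * ‖x - y‖)
    (x y : E) :
    P y ≤ P x + ⟪gradient P x, y - x⟫ + LP / 2 * ‖y - x‖ ^ 2 := by
  set v := y - x with hv
  set g := fun z => gradient P z with hg
  have hgcont : Continuous g := by
    have : LipschitzWith (Real.toNNReal LP) g :=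
      LipschitzWith.of_dist_le_mul (fun a b => by
        simpa [dist_eq_norm, Real.coe_toNNReal _ hLP] using hLip a b)
    exact this.continuous
  have hderiv : ∀ t : ℝ, HasDerivAt (fun t : ℝ => P (x + t • v)) ⟪g (x + t • v), v⟫ t := by
    intro t
    have h1 : HasDerivAt (fun t : ℝ => x + t • v) v t := by
      simpa using ((hasDerivAt_id t).smul_const v).const_add x
    have h3 : HasFDerivAt P (InnerProductSpace.toDual ℝ E (g (x + t • v))) (x + t • v) :=
      (hP (x + t • v)).hasGradientAt.hasFDerivAt
    convert h3.comp_hasDerivAt t h1 using 1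
    case e'_4 => rfl
    case e'_5 => rfl
    case e'_8 => rfl
    case e'_9 => simp
  have hcont : Continuous fun t : ℝ => ⟪g (x + t • v), v⟫ := by
    exact (hgcont.comp (continuous_const.add (continuous_id.smul continuous_const))).inner
      continuous_const
  have hcont2 : Continuous fun t : ℝ => ⟪g x, v⟫ + LP * t * ‖v‖ ^ 2 := by fun_prop
  have hftc : P (x + v) - P x = ∫ t in (0:ℝ)..1, ⟪g (x + t • v), v⟫ := by
    have := intervalIntegral.integral_eq_sub_of_hasDerivAt
      (f := fun t : ℝ => P (x + t • v)) (fun t _ => hderiv t)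
      (hcont.intervalIntegrable 0 1)
    simpa using this.symm
  have hbound : ∫ t in (0:ℝ)..1, ⟪g (x + t • v), v⟫ ≤
      ∫ t in (0:ℝ)..1, (⟪g x, v⟫ + LP * t * ‖v‖ ^ 2) := by
    apply intervalIntegral.integral_mono_on (by norm_num)
      (hcont.intervalIntegrable 0 1) (hcont2.intervalIntegrable 0 1)
    intro t ht
    have h1 : ⟪g (x + t • v), v⟫ - ⟪g x, v⟫ = ⟪g (x + t • v) - g x, v⟫ := by
      rw [inner_sub_left]
    have h2 : ⟪g (x + t • v) - g x, v⟫ ≤ ‖g (x + t • v) - g x‖ * ‖v‖ :=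
      real_inner_le_norm _ _
    have h3 : ‖g (x + t • v) - g x‖ ≤ LP * (t * ‖v‖) := by
      have := hLip (x + t • v) x
      simpa [norm_smul, abs_of_nonneg ht.1] using this
    nlinarith [norm_nonneg v, norm_nonneg (g (x + t • v) - g x)]
  have hint : ∫ t in (0:ℝ)..1, (⟪g x, v⟫ + LP * t * ‖v‖ ^ 2)
      = ⟪g x, v⟫ + LP / 2 * ‖v‖ ^ 2 := by
    have hc : Continuous fun t : ℝ => LP * t * ‖v‖ ^ 2 := by fun_prop
    rw [intervalIntegral.integral_add (intervalIntegrable_const)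
      (hc.intervalIntegrable 0 1)]
    have h4 : ∫ t in (0:ℝ)..1, LP * t * ‖v‖ ^ 2 = LP * ‖v‖ ^ 2 * ∫ t in (0:ℝ)..1, t := by
      rw [← intervalIntegral.integral_const_mul]
      congr 1; funext t; ring
    rw [h4, integral_id]
    simp
    ring
  have hy : y = x + v := by rw [hv]; abel
  rw [hy]
  have := hftc.le.trans (hbound.trans hint.le)
  linarith

theorem one_step_primal_gap_recursion {Ω : Type*} [MeasureSpace Ω]
    [IsProbabilityMeasure (volume : Measure Ω)]
    {E : Type*} [NormedAddCommGroup E] [InnerProductSpace ℝ E] [FiniteDimensional ℝ E]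
    (P : E → ℝ) (hP : Differentiable ℝ P) (LP : ℝ) (hLP : 0 < LP)
    (hLip : ∀ x y, ‖gradient P x - gradient P y‖ ≤ LP * ‖x - y‖)
    (Pstar : ℝ) (hPstar : IsGLB (Set.range P) Pstar)
    (w : E) (η : ℝ) (hη : 0 < η) (hη' : η ≤ 1 / (4 * LP))
    (G : Ω → E) (hG : MemLp G 2)
    (m : E) (hm : m = ∫ s, G s)
    (σ : ℝ) (hσ : (∫ s, ‖G s - m‖ ^ 2) ≤ σ ^ 2) :
    (∫ s, P (w - η • G s)) - Pstar ≤
      (P w - Pstar) - η / 2 * ‖gradient P w‖ ^ 2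
        + η / 2 * ‖gradient P w - m‖ ^ 2 + LP * η ^ 2 * σ ^ 2 / 2 := by
  set g := gradient P w with hgdef
  have hGint : Integrable G := hG.integrable one_le_two
  have hInt1 : Integrable (fun s => ⟪g, G s⟫) := by
    exact (innerSL ℝ g).integrable_comp hGint
  have hInt2 : Integrable (fun s => ‖G s‖ ^ 2) := hG.norm.integrable_sq
  have hA : Integrable (fun s => P w - η * ⟪g, G s⟫) := by
    exact (integrable_const (P w)).sub (hInt1.const_mul η)
  have hB : Integrable (fun s => LP / 2 * η ^ 2 * ‖G s‖ ^ 2) := hInt2.const_mul _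
  -- pointwise descent
  have hdesc : ∀ s, P (w - η • G s) ≤
      P w - η * ⟪g, G s⟫ + LP / 2 * η ^ 2 * ‖G s‖ ^ 2 := by
    intro s
    have hd := descent_lemma P hP LP hLP.le hLip w (w - η • G s)
    have h1 : (w - η • G s) - w = -(η • G s) := by abel
    rw [h1] at hd
    have h2 : ⟪g, -(η • G s)⟫ = -(η * ⟪g, G s⟫) := by
      rw [inner_neg_right, inner_smul_right]
    have h3 : ‖-(η • G s)‖ ^ 2 = η ^ 2 * ‖G s‖ ^ 2 := by
      rw [norm_neg, norm_smul, Real.norm_eq_abs, abs_of_nonneg hη.le, mul_pow]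
    rw [h2, h3] at hd
    linarith
  set h : Ω → ℝ := fun s => P w - η * ⟪g, G s⟫ + LP / 2 * η ^ 2 * ‖G s‖ ^ 2 with hhdef
  have hhint : Integrable h := hA.add hB
  have hfmeas : AEStronglyMeasurable (fun s => P (w - η • G s)) volume := by
    exact hP.continuous.comp_aestronglyMeasurable
      (aestronglyMeasurable_const.sub (hG.aestronglyMeasurable.const_smul η))
  have hflb : ∀ s, Pstar ≤ P (w - η • G s) := fun s =>
    hPstar.1 (Set.mem_range_self _)
  have hfint : Integrable (fun s => P (w - η • G s)) := by
    have hbnd : Integrable (fun s => |h s| + |Pstar|) :=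
      hhint.abs.add (integrable_const _)
    apply Integrable.mono' hbnd hfmeas
    filter_upwards with s
    have hub : P (w - η • G s) ≤ h s := hdesc s
    rw [Real.norm_eq_abs, abs_le]
    constructor
    · nlinarith [hflb s, abs_nonneg (h s), neg_abs_le Pstar]
    · nlinarith [le_abs_self (h s), abs_nonneg Pstar]
  have hle : ∫ s, P (w - η • G s) ≤ ∫ s, h s :=
    integral_mono hfint hhint (fun s => hdesc s)
  have hIinner : ∫ s, ⟪g, G s⟫ = ⟪g, m⟫ := by
    rw [hm]; exact integral_inner hGint g
  have hIh : ∫ s, h s = P w - η * ⟪g, m⟫ + LP / 2 * η ^ 2 * ∫ s, ‖G s‖ ^ 2 := by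
    calc ∫ s, h s
        = (∫ s, (P w - η * ⟪g, G s⟫)) + ∫ s, LP / 2 * η ^ 2 * ‖G s‖ ^ 2 :=
          integral_add hA hB
      _ = P w - η * ⟪g, m⟫ + LP / 2 * η ^ 2 * ∫ s, ‖G s‖ ^ 2 := by
          rw [integral_sub (integrable_const (P w)) (hInt1.const_mul η),
            integral_const_mul, integral_const_mul, hIinner, integral_const]
          simp
  have hGm : Integrable (fun s => G s - m) := hGint.sub (integrable_const m)
  have hGmsq : Integrable (fun s => ‖G s - m‖ ^ 2) :=
    (hG.sub (memLp_const m)).norm.integrable_sq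
  have hGminner : Integrable (fun s => ⟪m, G s - m⟫) := by
    exact (innerSL ℝ m).integrable_comp hGm
  have hGminner' : Integrable (fun s => 2 * ⟪G s - m, m⟫) := by
    have : (fun s => 2 * ⟪G s - m, m⟫) = fun s => 2 * ⟪m, G s - m⟫ := by
      funext s; rw [real_inner_comm]
    rw [this]; exact hGminner.const_mul 2
  have hzero : ∫ s, ⟪m, G s - m⟫ = 0 := by
    rw [integral_inner hGm m, integral_sub hGint (integrable_const m), integral_const]
    simp [← hm]
  have hnormsq : ∫ s, ‖G s‖ ^ 2 = (∫ s, ‖G s - m‖ ^ 2) + ‖m‖ ^ 2 := by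
    have hpt : ∀ s, ‖G s‖ ^ 2 = ‖G s - m‖ ^ 2 + 2 * ⟪G s - m, m⟫ + ‖m‖ ^ 2 := by
      intro s
      have := norm_add_sq_real (G s - m) m
      rw [sub_add_cancel] at this
      linarith
    have hC : Integrable (fun s => ‖G s - m‖ ^ 2 + 2 * ⟪G s - m, m⟫) :=
      hGmsq.add hGminner'
    have hz2 : ∫ s, 2 * ⟪G s - m, m⟫ = 0 := by
      have he : (fun s => 2 * ⟪G s - m, m⟫) = fun s => 2 * ⟪m, G s - m⟫ := by
        funext s; rw [real_inner_comm]
      rw [he, integral_const_mul, hzero, mul_zero]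
    rw [show (fun s : Ω => ‖G s‖ ^ 2) = fun s => ‖G s - m‖ ^ 2 + 2 * ⟪G s - m, m⟫ + ‖m‖ ^ 2
      from funext hpt]
    rw [integral_add hC (integrable_const _), integral_add hGmsq hGminner', hz2,
      integral_const]
    simp
  have hLPη : LP * η ≤ 1 / 4 := by
    rw [le_div_iff₀ (by positivity)] at hη'
    linarith
  have hexp : ‖g - m‖ ^ 2 = ‖g‖ ^ 2 - 2 * ⟪g, m⟫ + ‖m‖ ^ 2 := by
    have := norm_sub_sq_real g m
    linarith
  have hfinal := hle.trans_eq hIh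
  rw [hnormsq] at hfinal
  have hm2 : (0:ℝ) ≤ ‖m‖ ^ 2 := sq_nonneg _
  have k1 : LP / 2 * η ^ 2 * (∫ s, ‖G s - m‖ ^ 2) ≤ LP / 2 * η ^ 2 * σ ^ 2 :=
    mul_le_mul_of_nonneg_left hσ (by positivity)
  have k2 : LP / 2 * η ^ 2 * ‖m‖ ^ 2 ≤ η / 2 * ‖m‖ ^ 2 := by
    have hle' : LP / 2 * η ^ 2 ≤ η / 2 := by nlinarith
    exact mul_le_mul_of_nonneg_right hle' hm2
  nlinarith [k1, k2, hfinal, hexp]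
end

section
/- Let (Ω, 𝓕, ℙ) be a probability space, E and F finite-dimensional real inner product spaces, and h : E → F a C_h-Lipschitz map. Let a_prev, a ∈ E, ω ∈ F, and β ∈ (0, 1]. Let ξ : Ω → F be a square-integrable random vector with 𝔼[ξ] = h(a) and 𝔼[‖ξ - h(a)‖²] ≤ σ². Then the moving-average update ω' := (1 - β)ω + βξ satisfies 𝔼[‖ω' - h(a)‖²] ≤ (1 - β)‖ω - h(a_prev)‖² + (C_h²/β)‖a - a_prev‖² + 2β²σ². -/
open MeasureTheory

theorem moving_average_error_recursion {Ω : Type*} [MeasureSpace Ω]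
    [IsProbabilityMeasure (volume : Measure Ω)]
    {E F : Type*} [NormedAddCommGroup E] [InnerProductSpace ℝ E] [FiniteDimensional ℝ E]
    [NormedAddCommGroup F] [InnerProductSpace ℝ F] [FiniteDimensional ℝ F]
    (h : E → F) (Ch : ℝ) (hLip : ∀ x y, ‖h x - h y‖ ≤ Ch * ‖x - y‖)
    (aprev a : E) (ω : F) (β : ℝ) (hβ : 0 < β) (hβ1 : β ≤ 1)
    (ξ : Ω → F) (hξ : MemLp ξ 2) (hmean : (∫ s, ξ s) = h a)
    (σ : ℝ) (hvar : (∫ s, ‖ξ s - h a‖ ^ 2) ≤ σ ^ 2) :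
    (∫ s, ‖((1 - β) • ω + β • ξ s) - h a‖ ^ 2)
      ≤ (1 - β) * ‖ω - h aprev‖ ^ 2 + Ch ^ 2 / β * ‖a - aprev‖ ^ 2
        + 2 * β ^ 2 * σ ^ 2 := by
  set u : F := ω - h a with hu
  have h1β : (0:ℝ) ≤ 1 - β := by linarith
  have hv : MemLp (fun s => ξ s - h a) 2 := hξ.sub (memLp_const _)
  have hvint : Integrable (fun s => ξ s - h a) := hv.integrable (by norm_num)
  have hvsq : Integrable (fun s => ‖ξ s - h a‖ ^ 2) := by
    have h2 := hv.integrable_norm_rpow (by norm_num) (by norm_num)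
    simpa [Real.rpow_natCast] using h2
  have hinner : Integrable (fun s => (inner ℝ u (ξ s - h a) : ℝ)) :=
    hvint.const_inner u
  have hpt : ∀ s, ‖((1 - β) • ω + β • ξ s) - h a‖ ^ 2
      = (1 - β) ^ 2 * ‖u‖ ^ 2 + 2 * (1 - β) * β * (inner ℝ u (ξ s - h a) : ℝ)
        + β ^ 2 * ‖ξ s - h a‖ ^ 2 := by
    intro s
    have heq : ((1 - β) • ω + β • ξ s) - h a = (1 - β) • u + β • (ξ s - h a) := by
      rw [hu]; module
    rw [heq, norm_add_sq_real, real_inner_smul_left, real_inner_smul_right,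
      norm_smul, norm_smul]
    rw [Real.norm_eq_abs, Real.norm_eq_abs, abs_of_pos hβ, abs_of_nonneg h1β]
    ring
  have hmean0 : (∫ s, (ξ s - h a)) = 0 := by
    rw [integral_sub (hξ.integrable (by norm_num)) (integrable_const _),
      integral_const, hmean]
    simp
  have hint : (∫ s, ‖((1 - β) • ω + β • ξ s) - h a‖ ^ 2)
      = (1 - β) ^ 2 * ‖u‖ ^ 2 + β ^ 2 * (∫ s, ‖ξ s - h a‖ ^ 2) := by
    calc (∫ s, ‖((1 - β) • ω + β • ξ s) - h a‖ ^ 2)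
        = ∫ s, ((1 - β) ^ 2 * ‖u‖ ^ 2
            + 2 * (1 - β) * β * (inner ℝ u (ξ s - h a) : ℝ)
            + β ^ 2 * ‖ξ s - h a‖ ^ 2) :=
          integral_congr_ae (Filter.Eventually.of_forall hpt)
      _ = (1 - β) ^ 2 * ‖u‖ ^ 2
            + 2 * (1 - β) * β * (∫ s, (inner ℝ u (ξ s - h a) : ℝ))
            + β ^ 2 * (∫ s, ‖ξ s - h a‖ ^ 2) := by
          have hi1 : Integrable (fun s => (1 - β) ^ 2 * ‖u‖ ^ 2
              + 2 * (1 - β) * β * (inner ℝ u (ξ s - h a) : ℝ)) := by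
            exact (integrable_const _).add (hinner.const_mul _)
          rw [integral_add hi1 (hvsq.const_mul _),
            integral_add (integrable_const _) (hinner.const_mul _),
            integral_const, integral_const_mul, integral_const_mul]
          simp
      _ = (1 - β) ^ 2 * ‖u‖ ^ 2 + β ^ 2 * (∫ s, ‖ξ s - h a‖ ^ 2) := by
          rw [integral_inner hvint, hmean0]
          simp
  rw [hint]
  have hvarnn : (0:ℝ) ≤ ∫ s, ‖ξ s - h a‖ ^ 2 :=
    integral_nonneg fun s => by positivity
  set x := ‖ω - h aprev‖
  set y := ‖a - aprev‖
  set z := Ch * y with hz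
  have hznn : (0:ℝ) ≤ z := by
    have h1 := hLip aprev a
    rw [norm_sub_rev aprev a] at h1
    exact le_trans (norm_nonneg _) h1
  have hx : ‖u‖ ≤ x + z := by
    have h1 := hLip aprev a
    rw [norm_sub_rev aprev a] at h1
    calc ‖u‖ = ‖(ω - h aprev) + (h aprev - h a)‖ := by rw [hu]; abel_nf
      _ ≤ ‖ω - h aprev‖ + ‖h aprev - h a‖ := norm_add_le _ _
      _ ≤ x + z := by exact add_le_add le_rfl h1
  have hu2 : ‖u‖ ^ 2 ≤ (x + z) ^ 2 := pow_le_pow_left₀ (norm_nonneg u) hx 2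
  have key : (1 - β) ^ 2 * ‖u‖ ^ 2 - (1 - β) * x ^ 2 ≤ Ch ^ 2 * y ^ 2 / β := by
    rw [sub_le_iff_le_add, ← sub_le_iff_le_add', div_eq_mul_inv, ← sub_nonneg]
    have hzz : Ch ^ 2 * y ^ 2 = z ^ 2 := by rw [hz]; ring
    rw [hzz]
    have step : β * ((1 - β) ^ 2 * ‖u‖ ^ 2) ≤ β * ((1 - β) * x ^ 2) + z ^ 2 := by
      nlinarith [mul_le_mul_of_nonneg_left hu2 (by positivity : (0:ℝ) ≤ β * (1 - β) ^ 2),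
        mul_nonneg h1β (sq_nonneg (β * x - (1 - β) * z)),
        mul_nonneg (sq_nonneg z) (by nlinarith : (0:ℝ) ≤ β * (2 - β)),
        sq_nonneg z, sq_nonneg x, norm_nonneg u]
    have hβinv : (0:ℝ) < β⁻¹ := by positivity
    nlinarith [mul_le_mul_of_nonneg_left step (le_of_lt hβinv),
      mul_inv_cancel₀ (ne_of_gt hβ)]
  have hσ : β ^ 2 * (∫ s, ‖ξ s - h a‖ ^ 2) ≤ β ^ 2 * σ ^ 2 :=
    mul_le_mul_of_nonneg_left hvar (sq_nonneg β)
  have hσnn : (0:ℝ) ≤ β ^ 2 * σ ^ 2 :=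
    mul_nonneg (sq_nonneg β) (le_trans hvarnn hvar)
  have hring : Ch ^ 2 / β * y ^ 2 = Ch ^ 2 * y ^ 2 / β := by ring
  linarith [key, hσ, hσnn, hring.ge, hring.le]
end

section
/- Let (Ω, 𝓕, ℙ) be a probability space and E a finite-dimensional real inner product space. Let ψ : E → ℝ be differentiable with L-Lipschitz gradient (L > 0), bounded above with supremum P*, and satisfying the maximization μ-PL condition ‖∇ψ(a)‖² ≥ 2μ(P* - ψ(a)) for all a, with μ > 0. Let a ∈ E, let e ∈ E with ‖e‖ ≤ B, let 0 < γ ≤ 1/(4L), and let G : Ω → E be a square-integrable random vector with 𝔼[G] = ∇ψ(a) + e and 𝔼[‖G - 𝔼[G]‖²] ≤ V. Then 𝔼[P* - ψ(a + γG)] ≤ (1 - μγ/2)(P* - ψ(a)) + (3γ/4)B² + (Lγ²/2)V. -/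
open MeasureTheory intervalIntegral
open scoped RealInnerProductSpace

lemma descent_aux {E : Type*} [NormedAddCommGroup E] [InnerProductSpace ℝ E] [CompleteSpace E]
    (ψ : E → ℝ) (hψ : Differentiable ℝ ψ) (L : ℝ) (hL : 0 ≤ L)
    (hLip : ∀ x y, ‖gradient ψ x - gradient ψ y‖ ≤ L * ‖x - y‖) (x y : E) :
    ψ x + ⟪gradient ψ x, y - x⟫ - L / 2 * ‖y - x‖ ^ 2 ≤ ψ y := by
  set v := y - x with hv
  set g : ℝ → E := fun t => gradient ψ (x + t • v) with hg
  have hgl : ∀ s t : ℝ, ‖g s - g t‖ ≤ (L * ‖v‖) * |s - t| := by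
    intro s t
    calc ‖g s - g t‖ ≤ L * ‖(x + s • v) - (x + t • v)‖ := hLip _ _
    _ = (L * ‖v‖) * |s - t| := by
        rw [add_sub_add_left_eq_sub, ← sub_smul, norm_smul, Real.norm_eq_abs]; ring
  have hgc : Continuous g := by
    apply (LipschitzWith.of_dist_le_mul (K := ⟨L * ‖v‖, by positivity⟩) ?_).continuous
    intro s t
    rw [dist_eq_norm, Real.dist_eq]; exact hgl s t
  have hderiv : ∀ t : ℝ, HasDerivAt (fun t => ψ (x + t • v)) ⟪g t, v⟫ t := by
    intro t
    have hc : HasDerivAt (fun t : ℝ => x + t • v) v t := by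
      simpa using ((hasDerivAt_id t).smul_const v).const_add x
    have hgrad : HasFDerivAt ψ (fderiv ℝ ψ (x + t • v)) (x + t • v) :=
      (hψ (x + t • v)).hasFDerivAt
    have := hgrad.comp_hasDerivAt t hc
    convert this using 1
    show ⟪gradient ψ (x + t • v), v⟫ = _
    rw [gradient]
    simp [InnerProductSpace.toDual_apply_apply]
    all_goals rfl
  have hcont : Continuous fun t => ⟪g t, v⟫ := (continuous_inner.comp (hgc.prodMk continuous_const))
  have hftc : ψ y - ψ x = ∫ t in (0:ℝ)..1, ⟪g t, v⟫ := by
    have := integral_eq_sub_of_hasDerivAt (f := fun t => ψ (x + t • v))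
      (f' := fun t => ⟪g t, v⟫) (a := 0) (b := 1)
      (fun t _ => hderiv t) (hcont.intervalIntegrable 0 1)
    rw [this]; simp [hv]
  -- pointwise lower bound on the integrand
  have hpt : ∀ t ∈ Set.Icc (0:ℝ) 1, ⟪gradient ψ x, v⟫ - L * t * ‖v‖ ^ 2 ≤ ⟪g t, v⟫ := by
    intro t ht
    have h1 : ‖g t - g 0‖ ≤ L * t * ‖v‖ := by
      have := hgl t 0
      rw [sub_zero, abs_of_nonneg ht.1] at this
      linarith [this]
    have h2 : |⟪g t - g 0, v⟫| ≤ ‖g t - g 0‖ * ‖v‖ := abs_real_inner_le_norm _ _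
    have h3 : ⟪g t, v⟫ = ⟪g 0, v⟫ + ⟪g t - g 0, v⟫ := by
      rw [← inner_add_left]; congr 1; abel
    have h0 : g 0 = gradient ψ x := by simp [hg]
    have h4 : ‖g t - g 0‖ * ‖v‖ ≤ L * t * ‖v‖ ^ 2 := by
      nlinarith [norm_nonneg v, norm_nonneg (g t - g 0)]
    rw [h0] at h2 h3 h4
    rw [h3]
    nlinarith [abs_le.mp h2]
  have hc2 : Continuous (fun t : ℝ => ⟪gradient ψ x, v⟫ - L * t * ‖v‖ ^ 2) := by fun_prop
  have hint1 : IntervalIntegrable (fun t => ⟪gradient ψ x, v⟫ - L * t * ‖v‖ ^ 2) volume 0 1 :=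
    hc2.intervalIntegrable 0 1
  have hmono : (∫ t in (0:ℝ)..1, (⟪gradient ψ x, v⟫ - L * t * ‖v‖ ^ 2))
      ≤ ∫ t in (0:ℝ)..1, ⟪g t, v⟫ := by
    apply integral_mono_on zero_le_one hint1 (hcont.intervalIntegrable 0 1) hpt
  have hcomp : (∫ t in (0:ℝ)..1, (⟪gradient ψ x, v⟫ - L * t * ‖v‖ ^ 2))
      = ⟪gradient ψ x, v⟫ - L / 2 * ‖v‖ ^ 2 := by
    have he : ∀ t : ℝ, L * t * ‖v‖ ^ 2 = (L * ‖v‖ ^ 2) * t := fun t => by ring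
    rw [intervalIntegral.integral_sub
      ((continuous_const).intervalIntegrable 0 1)
      ((by fun_prop : Continuous (fun t : ℝ => L * t * ‖v‖ ^ 2)).intervalIntegrable 0 1)]
    simp_rw [he]
    rw [intervalIntegral.integral_const_mul, integral_id]
    simp
    ring
  linarith [hftc, hmono, hcomp]


set_option maxHeartbeats 1000000 in
theorem one_step_biased_ascent {Ω : Type*} [MeasureSpace Ω]
    [IsProbabilityMeasure (volume : Measure Ω)]
    {E : Type*} [NormedAddCommGroup E] [InnerProductSpace ℝ E] [FiniteDimensional ℝ E]
    (ψ : E → ℝ) (hψ : Differentiable ℝ ψ) (L : ℝ) (hL : 0 < L)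
    (hLip : ∀ x y, ‖gradient ψ x - gradient ψ y‖ ≤ L * ‖x - y‖)
    (Pstar : ℝ) (hPstar : IsLUB (Set.range ψ) Pstar)
    (μ : ℝ) (hμ : 0 < μ)
    (hPL : ∀ a, 2 * μ * (Pstar - ψ a) ≤ ‖gradient ψ a‖ ^ 2)
    (a : E) (e : E) (B : ℝ) (he : ‖e‖ ≤ B)
    (γ : ℝ) (hγ : 0 < γ) (hγ' : γ ≤ 1 / (4 * L))
    (G : Ω → E) (hG : MemLp G 2)
    (hmean : (∫ s, G s) = gradient ψ a + e)
    (V : ℝ) (hvar : (∫ s, ‖G s - ∫ t, G t‖ ^ 2) ≤ V) :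
    (∫ s, (Pstar - ψ (a + γ • G s))) ≤
      (1 - μ * γ / 2) * (Pstar - ψ a) + 3 * γ / 4 * B ^ 2 + L * γ ^ 2 / 2 * V := by
  have hgap0 : 0 ≤ Pstar - ψ a := sub_nonneg.2 (hPstar.1 ⟨a, rfl⟩)
  set g : E := gradient ψ a with hgdef
  clear_value g
  set m : E := ∫ s, G s with hmdef
  clear_value m
  -- integrability facts
  have hGint : Integrable G := hG.integrable (by norm_num)
  have hGsq : Integrable (fun s => ‖G s‖ ^ 2) := by
    have := hG.integrable_norm_rpow two_ne_zero ENNReal.ofNat_ne_top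
    simpa [Real.rpow_natCast] using this
  have hinner : Integrable (fun s => ⟪g, G s⟫) := by
    simpa using (innerSL ℝ g).integrable_comp hGint
  have hmul : Integrable (fun s => γ * ⟪g, G s⟫) := hinner.const_mul γ
  have hLmul : Integrable (fun s => L * γ ^ 2 / 2 * ‖G s‖ ^ 2) := hGsq.const_mul _
  have hsub : Integrable (fun s => (Pstar - ψ a) - γ * ⟪g, G s⟫) :=
    (integrable_const _).sub hmul
  have hrhsint : Integrable
      (fun s => (Pstar - ψ a) - γ * ⟪g, G s⟫ + L * γ ^ 2 / 2 * ‖G s‖ ^ 2) :=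
    hsub.add hLmul
  -- pointwise key inequality
  have key : ∀ s, Pstar - ψ (a + γ • G s) ≤
      (Pstar - ψ a) - γ * ⟪g, G s⟫ + L * γ ^ 2 / 2 * ‖G s‖ ^ 2 := by
    intro s
    have hd := descent_aux ψ hψ L hL.le hLip a (a + γ • G s)
    rw [add_sub_cancel_left] at hd
    rw [real_inner_smul_right, norm_smul, mul_pow, Real.norm_eq_abs, sq_abs] at hd
    rw [← hgdef] at hd
    nlinarith [hd]
  -- integrability of the LHS
  have hfmeas : AEStronglyMeasurable (fun s => Pstar - ψ (a + γ • G s)) volume := by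
    have hcont : Continuous fun x : E => Pstar - ψ (a + γ • x) := by
      have := hψ.continuous; fun_prop
    exact hcont.comp_aestronglyMeasurable hG.aestronglyMeasurable
  have hfnonneg : ∀ s, 0 ≤ Pstar - ψ (a + γ • G s) :=
    fun s => sub_nonneg.2 (hPstar.1 ⟨_, rfl⟩)
  have hfint : Integrable (fun s => Pstar - ψ (a + γ • G s)) := by
    refine hrhsint.mono' hfmeas ?_
    filter_upwards with s
    rw [Real.norm_eq_abs, abs_of_nonneg (hfnonneg s)]
    exact key s
  have hIle : (∫ s, (Pstar - ψ (a + γ • G s))) ≤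
      ∫ s, ((Pstar - ψ a) - γ * ⟪g, G s⟫ + L * γ ^ 2 / 2 * ‖G s‖ ^ 2) :=
    integral_mono hfint hrhsint key
  -- compute the RHS integral
  have hinnerI : (∫ s, ⟪g, G s⟫) = ⟪g, m⟫ := by
    have := ContinuousLinearMap.integral_comp_comm (innerSL ℝ g) hGint
    simpa [hmdef] using this
  have hIrhs : (∫ s, ((Pstar - ψ a) - γ * ⟪g, G s⟫ + L * γ ^ 2 / 2 * ‖G s‖ ^ 2))
      = (Pstar - ψ a) - γ * ⟪g, m⟫ + L * γ ^ 2 / 2 * (∫ s, ‖G s‖ ^ 2) := by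
    rw [integral_add hsub hLmul, integral_sub (integrable_const _) hmul,
        MeasureTheory.integral_const_mul, MeasureTheory.integral_const_mul, MeasureTheory.integral_const, hinnerI]
    simp
  -- variance decomposition
  have hdev : Integrable (fun s => G s - m) := hGint.sub (integrable_const m)
  have hdevsq : Integrable (fun s => ‖G s - m‖ ^ 2) := by
    have := (hG.sub (memLp_const m)).integrable_norm_rpow two_ne_zero ENNReal.ofNat_ne_top
    simpa [Real.rpow_natCast] using this
  have hcross : Integrable (fun s => ⟪m, G s - m⟫) := by
    simpa using (innerSL ℝ m).integrable_comp hdev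
  have hIdev : (∫ s, ⟪m, G s - m⟫) = 0 := by
    have h1 := ContinuousLinearMap.integral_comp_comm (innerSL ℝ m) hdev
    have h2 : (∫ s, (G s - m)) = 0 := by
      rw [integral_sub hGint (integrable_const m), MeasureTheory.integral_const, ← hmdef]
      simp
    simp only [innerSL_apply_apply] at h1
    rw [h1, h2, inner_zero_right]
  have hnormsq : (∫ s, ‖G s‖ ^ 2) = (∫ s, ‖G s - m‖ ^ 2) + ‖m‖ ^ 2 := by
    have hexp : ∀ s, ‖G s‖ ^ 2 = ‖G s - m‖ ^ 2 + 2 * ⟪m, G s - m⟫ + ‖m‖ ^ 2 := by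
      intro s
      have h := norm_add_sq_real (G s - m) m
      rw [sub_add_cancel] at h
      rw [h, real_inner_comm]
    calc (∫ s, ‖G s‖ ^ 2) = ∫ s, (‖G s - m‖ ^ 2 + 2 * ⟪m, G s - m⟫ + ‖m‖ ^ 2) := by
          simp_rw [hexp]
      _ = (∫ s, ‖G s - m‖ ^ 2) + 2 * (∫ s, ⟪m, G s - m⟫) + ‖m‖ ^ 2 := by
          have hx2 : Integrable (fun s => 2 * ⟪m, G s - m⟫) := hcross.const_mul 2
          have hx1 : Integrable (fun s => ‖G s - m‖ ^ 2 + 2 * ⟪m, G s - m⟫) := hdevsq.add hx2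
          rw [integral_add hx1 (integrable_const _), integral_add hdevsq hx2,
              MeasureTheory.integral_const_mul, MeasureTheory.integral_const]
          simp
      _ = (∫ s, ‖G s - m‖ ^ 2) + ‖m‖ ^ 2 := by rw [hIdev]; ring
  -- final algebra
  have hmge : m = g + e := hmean
  have e1 : ⟪g, m⟫ = ‖g‖ ^ 2 + ⟪g, e⟫ := by
    rw [hmge, inner_add_right, real_inner_self_eq_norm_sq]
  have e2 : ‖m‖ ^ 2 = ‖g‖ ^ 2 + 2 * ⟪g, e⟫ + ‖e‖ ^ 2 := by
    rw [hmge]; exact norm_add_sq_real g e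
  have hVr0 : 0 ≤ ∫ s, ‖G s - m‖ ^ 2 := integral_nonneg fun s => by positivity
  have hVrV : (∫ s, ‖G s - m‖ ^ 2) ≤ V := hvar
  have hLγ : L * γ ≤ 1 / 4 := by
    rw [le_div_iff₀ (by positivity : (0:ℝ) < 4 * L)] at hγ'
    nlinarith
  have hLγ2 : L * γ ^ 2 ≤ γ / 4 := by nlinarith
  have hip : |⟪g, e⟫| ≤ (‖g‖ ^ 2 + ‖e‖ ^ 2) / 2 := by
    have h1 := abs_real_inner_le_norm g e
    nlinarith [sq_nonneg (‖g‖ - ‖e‖)]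
  have hipu := (abs_le.mp hip).2
  have hipl := (abs_le.mp hip).1
  have hs2B : ‖e‖ ^ 2 ≤ B ^ 2 := pow_le_pow_left₀ (norm_nonneg e) he 2
  have hPLa : 2 * μ * (Pstar - ψ a) ≤ ‖g‖ ^ 2 := by rw [hgdef]; exact hPL a
  have hc0 : 0 ≤ L * γ ^ 2 / 2 := by positivity
  have A1 : L * γ ^ 2 / 2 * (∫ s, ‖G s - m‖ ^ 2) ≤ L * γ ^ 2 / 2 * V := mul_le_mul_of_nonneg_left hVrV hc0
  have A2 : L * γ ^ 2 * ‖g‖ ^ 2 ≤ γ / 4 * ‖g‖ ^ 2 :=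
    mul_le_mul_of_nonneg_right hLγ2 (sq_nonneg _)
  have A3 : L * γ ^ 2 * ‖e‖ ^ 2 ≤ γ / 4 * ‖e‖ ^ 2 :=
    mul_le_mul_of_nonneg_right hLγ2 (sq_nonneg _)
  have A4 : L * γ ^ 2 * ⟪g, e⟫ ≤ L * γ ^ 2 * ((‖g‖ ^ 2 + ‖e‖ ^ 2) / 2) :=
    mul_le_mul_of_nonneg_left hipu (by positivity)
  have A5 : L * γ ^ 2 * ((‖g‖ ^ 2 + ‖e‖ ^ 2) / 2) ≤ γ / 4 * ((‖g‖ ^ 2 + ‖e‖ ^ 2) / 2) :=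
    mul_le_mul_of_nonneg_right hLγ2 (by positivity)
  have A6 : γ * (-⟪g, e⟫) ≤ γ * ((‖g‖ ^ 2 + ‖e‖ ^ 2) / 2) :=
    mul_le_mul_of_nonneg_left (by linarith) hγ.le
  have A7 : μ * γ / 2 * (Pstar - ψ a) ≤ γ / 4 * ‖g‖ ^ 2 := by
    have h := mul_le_mul_of_nonneg_left hPLa (show (0:ℝ) ≤ γ / 4 by positivity)
    calc μ * γ / 2 * (Pstar - ψ a) = γ / 4 * (2 * μ * (Pstar - ψ a)) := by ring
      _ ≤ γ / 4 * ‖g‖ ^ 2 := h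
  have A8 : 3 * γ / 4 * ‖e‖ ^ 2 ≤ 3 * γ / 4 * B ^ 2 :=
    mul_le_mul_of_nonneg_left hs2B (by positivity)
  calc (∫ s, (Pstar - ψ (a + γ • G s)))
      ≤ (Pstar - ψ a) - γ * ⟪g, m⟫ + L * γ ^ 2 / 2 * (∫ s, ‖G s‖ ^ 2) := by
        rw [← hIrhs]; exact hIle
    _ = (Pstar - ψ a) - γ * (‖g‖ ^ 2 + ⟪g, e⟫)
        + L * γ ^ 2 / 2 * ((∫ s, ‖G s - m‖ ^ 2) + (‖g‖ ^ 2 + 2 * ⟪g, e⟫ + ‖e‖ ^ 2)) := by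
        rw [e1, hnormsq, e2]
    _ ≤ (1 - μ * γ / 2) * (Pstar - ψ a) + 3 * γ / 4 * B ^ 2 + L * γ ^ 2 / 2 * V := by
        clear hIle hIrhs hnormsq hinnerI hIdev key hfnonneg hvar hmdef hfint
        clear hrhsint hsub hLmul hmul hinner hGsq hGint hdev hdevsq hcross hfmeas
        nlinarith [A1, A2, A3, A4, A5, A6, A7, A8]
end
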